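/- Let μ⋆ be a Borel probability measure on ℝ^d with ∫|v|² dμ⋆ = 1, and let Θ ∈ (1,∞). Suppose that for M > 0 there is λ_M > 0 with ψ_M := log ∫ e^{λ_M |v|² 1[|v|≥M]} μ⋆(dv) < ∞, and let μ⋆_M(dv) := exp(λ_M |v|² 1[|v|≥M] − ψ_M) μ⋆(dv); assume the normalization ∫ |v|² dμ⋆_M = Θ. Then e^{ψ_M} ≤ 1 + Θ M^{−2} e^{ψ_M}; in particular for M² > Θ one has ψ_M ≤ −log(1 − Θ M^{−2}), and ‖μ⋆_M − μ⋆‖_TV ≤ |1 − e^{−ψ_M}| + (Θ+1) M^{−2}. Consequently, if this normalization holds for all M in a sequence tending to ∞, then ψ_M → 0 and ‖μ⋆_M − μ⋆‖_TV → 0 as M → ∞. -/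

import Mathlib

open MeasureTheory Filter
open scoped ENNReal Topology

/-- `|v|² 1[|v| ≥ M]`. -/
noncomputable def indSq (d : ℕ) (M : ℝ) (v : EuclideanSpace ℝ (Fin d)) : ℝ :=
  if M ≤ ‖v‖ then ‖v‖ ^ 2 else 0

/-- `ψ_M = log ∫ e^{λ_M |v|² 1[|v|≥M]} dμ⋆`. -/
noncomputable def psiTilt (d : ℕ) (μ : Measure (EuclideanSpace ℝ (Fin d)))
    (lam M : ℝ) : ℝ :=
  Real.log (∫ v, Real.exp (lam * indSq d M v) ∂μ)

/-- The tilted measure `μ⋆_M(dv) = exp(λ_M |v|² 1[|v|≥M] − ψ_M) μ⋆(dv)`. -/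
noncomputable def tiltedMeasure (d : ℕ) (μ : Measure (EuclideanSpace ℝ (Fin d)))
    (lam M : ℝ) : Measure (EuclideanSpace ℝ (Fin d)) :=
  μ.withDensity fun v => ENNReal.ofReal (Real.exp (lam * indSq d M v - psiTilt d μ lam M))

open scoped NNReal

lemma measurable_indSq (d : ℕ) (M : ℝ) : Measurable (indSq d M) := by
  unfold indSq
  exact Measurable.ite (measurableSet_le measurable_const measurable_norm)
    (measurable_norm.pow_const 2) measurable_const

lemma indSq_nonneg (d : ℕ) (M : ℝ) (v : EuclideanSpace ℝ (Fin d)) : 0 ≤ indSq d M v := by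
  unfold indSq; split_ifs <;> positivity

lemma tilt_aux (d : ℕ) (μ : Measure (EuclideanSpace ℝ (Fin d))) [IsProbabilityMeasure μ]
    (Θ : ℝ) (hΘ : 1 < Θ) (M lam : ℝ) (hM : 0 < M) (hlam : 0 < lam)
    (hInt : Integrable (fun v => Real.exp (lam * indSq d M v)) μ)
    (hnorm : (∫ v, ‖v‖ ^ 2 ∂(tiltedMeasure d μ lam M)) = Θ) :
    0 ≤ psiTilt d μ lam M ∧
    Real.exp (psiTilt d μ lam M) ≤ 1 + Θ / M ^ 2 * Real.exp (psiTilt d μ lam M) ∧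
    (Θ < M ^ 2 → psiTilt d μ lam M ≤ -Real.log (1 - Θ / M ^ 2)) ∧
    (∫ v, |Real.exp (lam * indSq d M v - psiTilt d μ lam M) - 1| ∂μ)
        ≤ |1 - Real.exp (-psiTilt d μ lam M)| + (Θ + 1) / M ^ 2 := by
  set ψ := psiTilt d μ lam M with hψdef
  set Z := ∫ v, Real.exp (lam * indSq d M v) ∂μ with hZdef
  have hM2 : (0:ℝ) < M ^ 2 := by positivity
  have hone : ∀ v : EuclideanSpace ℝ (Fin d), (1:ℝ) ≤ Real.exp (lam * indSq d M v) :=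
    fun v => Real.one_le_exp (mul_nonneg hlam.le (indSq_nonneg d M v))
  have hZ1 : (1:ℝ) ≤ Z := by
    calc (1:ℝ) = ∫ _, (1:ℝ) ∂μ := by simp
    _ ≤ Z := integral_mono (integrable_const 1) hInt fun v => hone v
  have hexpψ : Real.exp ψ = Z := Real.exp_log (by linarith)
  have hψ0 : 0 ≤ ψ := Real.log_nonneg hZ1
  -- transfer the tilted integral
  set ρ : EuclideanSpace ℝ (Fin d) → ℝ≥0 :=
    fun v => (Real.exp (lam * indSq d M v - ψ)).toNNReal with hρdef
  have hρmeas : Measurable ρ :=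
    (Real.measurable_exp.comp ((measurable_const.mul (measurable_indSq d M)).sub
      measurable_const)).real_toNNReal
  have hmeq : tiltedMeasure d μ lam M = μ.withDensity (fun v => (ρ v : ℝ≥0∞)) := rfl
  have hsmul : (fun v : EuclideanSpace ℝ (Fin d) => ρ v • (‖v‖ ^ 2 : ℝ))
      = fun v => Real.exp (lam * indSq d M v - ψ) * ‖v‖ ^ 2 := by
    funext v
    simp [hρdef, NNReal.smul_def, Real.coe_toNNReal _ (Real.exp_nonneg _)]
  have hIμM : Integrable (fun v => (‖v‖ ^ 2 : ℝ)) (tiltedMeasure d μ lam M) := by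
    by_contra h
    rw [integral_undef h] at hnorm
    linarith
  have hI : Integrable (fun v => Real.exp (lam * indSq d M v - ψ) * ‖v‖ ^ 2) μ := by
    rw [hmeq, integrable_withDensity_iff_integrable_smul hρmeas] at hIμM
    rwa [hsmul] at hIμM
  have hval : ∫ v, Real.exp (lam * indSq d M v - ψ) * ‖v‖ ^ 2 ∂μ = Θ := by
    rw [← hsmul, ← integral_withDensity_eq_integral_smul hρmeas, ← hmeq, hnorm]
  have hfun : (fun v : EuclideanSpace ℝ (Fin d) =>
      Real.exp (lam * indSq d M v - ψ) * ‖v‖ ^ 2)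
      = fun v => Real.exp (-ψ) * (Real.exp (lam * indSq d M v) * ‖v‖ ^ 2) := by
    funext v
    rw [Real.exp_sub, Real.exp_neg]
    ring
  have hI3 : Integrable (fun v => Real.exp (lam * indSq d M v) * ‖v‖ ^ 2) μ := by
    have h2 := (hI.const_mul (Real.exp ψ))
    have h3 : (fun v : EuclideanSpace ℝ (Fin d) =>
        Real.exp ψ * (Real.exp (lam * indSq d M v - ψ) * ‖v‖ ^ 2))
        = fun v => Real.exp (lam * indSq d M v) * ‖v‖ ^ 2 := by
      funext v
      rw [Real.exp_sub]
      field_simp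
    rwa [h3] at h2
  have hE : ∫ v, Real.exp (lam * indSq d M v) * ‖v‖ ^ 2 ∂μ = Θ * Real.exp ψ := by
    rw [hfun] at hval
    rw [integral_const_mul] at hval
    have hpos := Real.exp_pos ψ
    have hne : Real.exp (-ψ) * Real.exp ψ = 1 := by
      rw [← Real.exp_add]; simp
    have h7 := congrArg (fun x : ℝ => Real.exp ψ * x) hval
    simp only [← mul_assoc] at h7
    rw [mul_comm (Real.exp ψ) (Real.exp (-ψ)), hne, one_mul] at h7
    linarith [h7]
  -- Claim 1
  have hpt : ∀ v : EuclideanSpace ℝ (Fin d), Real.exp (lam * indSq d M v)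
      ≤ 1 + 1 / M ^ 2 * (Real.exp (lam * indSq d M v) * ‖v‖ ^ 2) := by
    intro v
    unfold indSq
    split_ifs with h
    · have h2 : M ^ 2 ≤ ‖v‖ ^ 2 := by nlinarith [norm_nonneg v]
      have h3 := Real.exp_pos (lam * ‖v‖ ^ 2)
      have h4 : (1:ℝ) ≤ 1 / M ^ 2 * ‖v‖ ^ 2 := by
        rw [one_div, inv_mul_eq_div, le_div_iff₀ hM2]
        linarith
      have h5 : Real.exp (lam * ‖v‖ ^ 2) ≤ (1 / M ^ 2 * ‖v‖ ^ 2) * Real.exp (lam * ‖v‖ ^ 2) :=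
        le_mul_of_one_le_left h3.le h4
      nlinarith
    · simp only [mul_zero, Real.exp_zero, one_mul]
      have : 0 ≤ 1 / M ^ 2 * ‖v‖ ^ 2 := by positivity
      linarith
  have hZle : Z ≤ 1 + 1 / M ^ 2 * (Θ * Real.exp ψ) := by
    calc Z ≤ ∫ v, (1 + 1 / M ^ 2 * (Real.exp (lam * indSq d M v) * ‖v‖ ^ 2)) ∂μ :=
        integral_mono hInt ((integrable_const 1).add (hI3.const_mul _)) hpt
    _ = 1 + 1 / M ^ 2 * (Θ * Real.exp ψ) := by
        rw [integral_add (integrable_const 1) (hI3.const_mul _), integral_const_mul, hE]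
        simp
  have claim1 : Real.exp ψ ≤ 1 + Θ / M ^ 2 * Real.exp ψ := by
    rw [hexpψ] at hZle ⊢
    have h6 : (1:ℝ) / M ^ 2 * (Θ * Z) = Θ / M ^ 2 * Z := by ring
    linarith
  have hexpnψ : Real.exp (-ψ) * Real.exp ψ = 1 := by rw [← Real.exp_add]; simp
  have hkey : 1 - Real.exp (-ψ) ≤ Θ / M ^ 2 := by
    have h := mul_le_mul_of_nonneg_left claim1 (Real.exp_pos (-ψ)).le
    nlinarith [h, hexpnψ]
  refine ⟨hψ0, claim1, ?_, ?_⟩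
  · intro hΘM
    have hc : (0:ℝ) < 1 - Θ / M ^ 2 := by
      rw [sub_pos]
      exact (div_lt_one hM2).mpr hΘM
    have h1 : Real.exp ψ * (1 - Θ / M ^ 2) ≤ 1 := by nlinarith [claim1]
    have h3 : ψ ≤ Real.log ((1 - Θ / M ^ 2)⁻¹) := by
      rw [Real.le_log_iff_exp_le (by positivity)]
      rw [← one_div]
      exact (le_div_iff₀ hc).mpr h1
    rwa [Real.log_inv] at h3
  · -- TV bound
    have hexple1 : Real.exp (-ψ) ≤ 1 := Real.exp_le_one_iff.mpr (by linarith)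
    have hptTV : ∀ v : EuclideanSpace ℝ (Fin d),
        |Real.exp (lam * indSq d M v - ψ) - 1|
          ≤ Real.exp (-ψ) * Real.exp (lam * indSq d M v) + (1 - 2 * Real.exp (-ψ)) := by
      intro v
      have ha : Real.exp (lam * indSq d M v - ψ)
          = Real.exp (-ψ) * Real.exp (lam * indSq d M v) := by
        rw [← Real.exp_add]; ring_nf
      have h3 := mul_le_mul_of_nonneg_left (hone v) (Real.exp_pos (-ψ)).le
      rw [mul_one] at h3
      rw [ha]
      rw [abs_le]
      constructor <;> linarith
    have hIexp : Integrable (fun v => Real.exp (lam * indSq d M v - ψ)) μ := by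
      have h2 := hInt.const_mul (Real.exp (-ψ))
      have h3 : (fun v : EuclideanSpace ℝ (Fin d) =>
          Real.exp (-ψ) * Real.exp (lam * indSq d M v))
          = fun v => Real.exp (lam * indSq d M v - ψ) := by
        funext v; rw [← Real.exp_add]; ring_nf
      rwa [h3] at h2
    have hIabs : Integrable (fun v => |Real.exp (lam * indSq d M v - ψ) - 1|) μ :=
      (hIexp.sub (integrable_const 1)).abs
    have hRHSInt : Integrable (fun v =>
        Real.exp (-ψ) * Real.exp (lam * indSq d M v) + (1 - 2 * Real.exp (-ψ))) μ :=
      (hInt.const_mul _).add (integrable_const _)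
    have habs : |1 - Real.exp (-ψ)| = 1 - Real.exp (-ψ) := abs_of_nonneg (by linarith)
    have hdiv : Θ / M ^ 2 ≤ (Θ + 1) / M ^ 2 := by gcongr; linarith
    calc (∫ v, |Real.exp (lam * indSq d M v - ψ) - 1| ∂μ)
        ≤ ∫ v, (Real.exp (-ψ) * Real.exp (lam * indSq d M v) + (1 - 2 * Real.exp (-ψ))) ∂μ :=
          integral_mono hIabs hRHSInt hptTV
      _ = Real.exp (-ψ) * Z + (1 - 2 * Real.exp (-ψ)) := by
          rw [integral_add (hInt.const_mul _) (integrable_const _), integral_const_mul,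
            integral_const]
          simp [hZdef]
      _ ≤ |1 - Real.exp (-ψ)| + (Θ + 1) / M ^ 2 := by
          rw [habs]
          have hZψ : Real.exp (-ψ) * Z = 1 := by rw [← hexpψ]; exact hexpnψ
          linarith

lemma tilt_div_tendsto (c : ℝ) {Ms : ℕ → ℝ} (hMs : Tendsto Ms atTop atTop) :
    Tendsto (fun n => c / Ms n ^ 2) atTop (𝓝 0) :=
  Tendsto.div_atTop tendsto_const_nhds ((tendsto_pow_atTop two_ne_zero).comp hMs)

/-- quantitative bounds on the exponential tilt of `μ⋆` at level `M`,
normalised to have energy `Θ`, and the consequent limits along any sequence `M → ∞`.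
Here the total variation norm `‖μ⋆_M − μ⋆‖_TV` is the integral `∫ |e^{λ_M|v|²1[|v|≥M]−ψ_M} − 1| dμ⋆`
of the absolute difference of the densities of `μ⋆_M` and `μ⋆` with respect to `μ⋆`. -/
theorem tilted_measure_bounds_and_limits (d : ℕ)
    (μ : Measure (EuclideanSpace ℝ (Fin d))) [IsProbabilityMeasure μ]
    (hmom : ∫ v, ‖v‖ ^ 2 ∂μ = 1) (Θ : ℝ) (hΘ : 1 < Θ) :
    (∀ M lam : ℝ, 0 < M → 0 < lam →
      Integrable (fun v => Real.exp (lam * indSq d M v)) μ →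
      (∫ v, ‖v‖ ^ 2 ∂(tiltedMeasure d μ lam M)) = Θ →
      (Real.exp (psiTilt d μ lam M) ≤ 1 + Θ / M ^ 2 * Real.exp (psiTilt d μ lam M)) ∧
      (Θ < M ^ 2 → psiTilt d μ lam M ≤ -Real.log (1 - Θ / M ^ 2)) ∧
      ((∫ v, |Real.exp (lam * indSq d M v - psiTilt d μ lam M) - 1| ∂μ)
          ≤ |1 - Real.exp (-psiTilt d μ lam M)| + (Θ + 1) / M ^ 2)) ∧
    (∀ Ms lams : ℕ → ℝ, Tendsto Ms atTop atTop →
      (∀ n, 0 < Ms n ∧ 0 < lams n ∧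
        Integrable (fun v => Real.exp (lams n * indSq d (Ms n) v)) μ ∧
        (∫ v, ‖v‖ ^ 2 ∂(tiltedMeasure d μ (lams n) (Ms n))) = Θ) →
      Tendsto (fun n => psiTilt d μ (lams n) (Ms n)) atTop (𝓝 0) ∧
      Tendsto (fun n =>
          ∫ v, |Real.exp (lams n * indSq d (Ms n) v - psiTilt d μ (lams n) (Ms n)) - 1| ∂μ)
        atTop (𝓝 0)) := by
  constructor
  · intro M lam hM hlam hInt hnorm
    obtain ⟨-, h1, h2, h3⟩ := tilt_aux d μ Θ hΘ M lam hM hlam hInt hnorm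
    exact ⟨h1, h2, h3⟩
  · intro Ms lams hMs hall
    have haux := fun n => tilt_aux d μ Θ hΘ (Ms n) (lams n) (hall n).1 (hall n).2.1
      (hall n).2.2.1 (hall n).2.2.2
    have hψtend : Tendsto (fun n => psiTilt d μ (lams n) (Ms n)) atTop (𝓝 0) := by
      apply squeeze_zero' (Eventually.of_forall fun n => (haux n).1)
      · filter_upwards [hMs.eventually_ge_atTop (Θ + 1)] with n hn
        exact (haux n).2.2.1 (by nlinarith)
      · have h1 := tilt_div_tendsto Θ hMs
        have h2 : Tendsto (fun n => 1 - Θ / Ms n ^ 2) atTop (𝓝 1) := by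
          simpa using tendsto_const_nhds.sub h1
        have h3 : Tendsto (fun n => Real.log (1 - Θ / Ms n ^ 2)) atTop (𝓝 0) := by
          have h4 := (Real.continuousAt_log (by norm_num : (1:ℝ) ≠ 0)).tendsto.comp h2
          simpa [Function.comp_def] using h4
        simpa using h3.neg
    refine ⟨hψtend, ?_⟩
    apply squeeze_zero'
      (Eventually.of_forall fun n => integral_nonneg fun v => abs_nonneg _)
      (Eventually.of_forall fun n => (haux n).2.2.2)
    have h5 : Tendsto (fun n => Real.exp (-psiTilt d μ (lams n) (Ms n))) atTop (𝓝 1) := by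
      have h0 : Tendsto (fun n => -psiTilt d μ (lams n) (Ms n)) atTop (𝓝 0) := by
        simpa using hψtend.neg
      simpa [Function.comp_def] using (Real.continuous_exp.tendsto 0).comp h0
    have h6 : Tendsto (fun n => |1 - Real.exp (-psiTilt d μ (lams n) (Ms n))|) atTop (𝓝 0) := by
      have h0 : Tendsto (fun n => 1 - Real.exp (-psiTilt d μ (lams n) (Ms n))) atTop (𝓝 0) := by
        simpa using (tendsto_const_nhds (x := (1:ℝ))).sub h5
      simpa [Function.comp_def] using (continuous_abs.tendsto 0).comp h0
    simpa using h6.add (tilt_div_tendsto (Θ + 1) hMs)
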